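/- Suppose Assumption (Φ-convexity) holds for (p,λ) with λ > 0 and the local slope satisfies the global formula |∂φ|(x) = sup_{y≠x}[(φ(x)−φ(y))/d(x,y) + (λ/p)d^{p−1}(x,y)]₊. Then for every x in the domain of φ, φ(x) − inf_X φ ≤ |∂φ|^q(x)/(q·λ^{q/p}), where q = p/(p−1). -/

import Mathlib

open scoped ENNReal

/-- The nonnegative part of an extended real, as an extended nonnegative real. -/
noncomputable def erealPosPart (x : EReal) : ℝ≥0∞ :=
  if x = ⊤ then ⊤ else ENNReal.ofReal x.toReal

/-- If the local slope satisfies the global formula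
`|∂φ|(x) = sup_{y≠x}[(φ(x)−φ(y))/d(x,y) + (λ/p)d^{p−1}(x,y)]₊` with `λ > 0`,
then `φ(x) − inf_X φ ≤ |∂φ|^q(x)/(q·λ^{q/p})` for every `x` in the domain of `φ`
(stated equivalently as `φ(x) ≤ φ(y) + |∂φ|^q(x)/(q·λ^{q/p})` for all `y`). -/
theorem young_aux (p q lam A D : ℝ) (hp : 1 < p) (hq : q = p/(p-1)) (hlam : 0 < lam)
    (hA : 0 ≤ A) (hD : 0 < D) :
    A * D - lam / p * D ^ p ≤ A ^ q / (q * lam ^ (q / p)) := by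
  have hpq : p.HolderConjugate q := (Real.holderConjugate_iff_eq_conjExponent hp).2 hq
  have hlp : (0:ℝ) < lam ^ (1/p) := Real.rpow_pos_of_pos hlam _
  have h1 : 0 ≤ lam ^ (1/p) * D := by positivity
  have h2 : 0 ≤ A / lam ^ (1/p) := by positivity
  have hy := Real.young_inequality_of_nonneg h1 h2 hpq
  have e1 : (lam ^ (1/p) * D) ^ p = lam * D ^ p := by
    rw [Real.mul_rpow hlp.le hD.le, ← Real.rpow_mul hlam.le]
    rw [one_div, inv_mul_cancel₀ hpq.ne_zero, Real.rpow_one]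
  have e2 : (A / lam ^ (1/p)) ^ q = A ^ q / lam ^ (q/p) := by
    rw [Real.div_rpow hA hlp.le, ← Real.rpow_mul hlam.le, one_div, inv_mul_eq_div]
  have e3 : lam ^ (1/p) * D * (A / lam ^ (1/p)) = A * D := by
    field_simp
  rw [e1, e2, e3] at hy
  have hlqp : (0:ℝ) < lam ^ (q/p) := Real.rpow_pos_of_pos hlam _
  have h4 : A ^ q / lam ^ (q/p) / q = A ^ q / (q * lam ^ (q/p)) := by
    field_simp
  rw [h4] at hy
  have h5 : lam * D ^ p / p = lam / p * D ^ p := by ring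
  linarith [hy, h5]


theorem stmt_17 {X : Type*} (d : X → X → ℝ)
    -- asymmetric metric space axioms
    (hd_nonneg : ∀ x y, 0 ≤ d x y)
    (hd_eq : ∀ x y, d x y = 0 ↔ x = y)
    (hd_tri : ∀ x y z, d x z ≤ d x y + d y z)
    -- exponents and positive convexity parameter
    (p q lam : ℝ) (hp : 1 < p) (hq : q = p / (p - 1)) (hlam : 0 < lam)
    -- potential: proper, never −∞
    (φ : X → EReal) (hproper : ∃ x, φ x ≠ ⊤) (hbot : ∀ x, φ x ≠ ⊥)
    -- the local slope, given by the global formula (hypothesis)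
    (S : X → ℝ≥0∞)
    (hS : ∀ x : X, φ x ≠ ⊤ →
      S x = ⨆ y : X, ⨆ _ : y ≠ x,
        erealPosPart ((φ x - φ y) * (((d x y)⁻¹ : ℝ) : EReal)
          + ((lam / p * d x y ^ (p - 1) : ℝ) : EReal))) :
    ∀ x : X, φ x ≠ ⊤ → ∀ y : X,
      φ x ≤ φ y + ((S x ^ q / ENNReal.ofReal (q * lam ^ (q / p)) : ℝ≥0∞) : EReal) := by
  intro x hx y
  set c : ℝ≥0∞ := S x ^ q / ENNReal.ofReal (q * lam ^ (q / p)) with hc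
  have hcnonneg : (0 : EReal) ≤ (c : EReal) := by exact_mod_cast bot_le
  by_cases hytop : φ y = ⊤
  · rw [hytop, EReal.top_add_of_ne_bot (EReal.coe_ennreal_ne_bot c)]
    exact le_top
  -- both finite
  set a : ℝ := (φ x).toReal with ha
  set b : ℝ := (φ y).toReal with hb
  have hax : φ x = (a : EReal) := (EReal.coe_toReal hx (hbot x)).symm
  have hby : φ y = (b : EReal) := (EReal.coe_toReal hytop (hbot y)).symm
  by_cases hab : a ≤ b
  · calc φ x = (a : EReal) := hax
      _ ≤ (b : EReal) := by exact_mod_cast hab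
      _ = φ y := hby.symm
      _ ≤ φ y + c := le_add_of_nonneg_right hcnonneg
  push_neg at hab
  have hyx : y ≠ x := by
    rintro rfl; rw [hax] at hby; exact absurd (by exact_mod_cast hby.symm : b = a) hab.ne
  have hD : 0 < d x y := by
    rcases lt_or_eq_of_le (hd_nonneg x y) with h | h
    · exact h
    · exact absurd ((hd_eq x y).mp h.symm) (Ne.symm hyx)
  set D : ℝ := d x y
  set A : ℝ := (a - b) * D⁻¹ + lam / p * D ^ (p - 1) with hA
  have hApos : 0 < A := by
    have : 0 < (a - b) * D⁻¹ := mul_pos (by linarith) (inv_pos.mpr hD)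
    have h2 : 0 < lam / p * D ^ (p - 1) := by positivity
    have h3 := add_pos this h2
    rwa [← hA] at h3
  -- the inner EReal expression equals ↑A
  have hexpr : (φ x - φ y) * (((D)⁻¹ : ℝ) : EReal) + ((lam / p * D ^ (p - 1) : ℝ) : EReal)
      = ((A : ℝ) : EReal) := by
    rw [hax, hby, hA]
    norm_cast
  have hSineq : ENNReal.ofReal A ≤ S x := by
    rw [hS x hx]
    refine le_trans ?_ (le_iSup _ y)
    refine le_trans ?_ (le_iSup _ hyx)
    rw [hexpr]
    simp [erealPosPart]
  -- young
  have hyoung : a - b ≤ A ^ q / (q * lam ^ (q / p)) := by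
    have h := young_aux p q lam A D hp hq hlam hApos.le hD
    have hAD : A * D = (a - b) + lam / p * D ^ p := by
      rw [hA]; rw [add_mul, mul_assoc, inv_mul_cancel₀ hD.ne', mul_one]
      congr 1
      rw [mul_assoc, ← Real.rpow_add_one hD.ne']
      norm_num
    rw [hAD] at h
    linarith
  have hqpos : 0 < q := by
    rw [hq]; exact div_pos (by linarith) (by linarith)
  have hden : 0 < q * lam ^ (q / p) := by positivity
  -- push to ENNReal
  have h1 : ENNReal.ofReal (A ^ q) ≤ S x ^ q := by
    calc ENNReal.ofReal (A ^ q) = ENNReal.ofReal A ^ q := by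
          rw [← ENNReal.ofReal_rpow_of_pos hApos]
      _ ≤ S x ^ q := ENNReal.rpow_le_rpow hSineq hqpos.le
  have h2 : ENNReal.ofReal (A ^ q / (q * lam ^ (q / p))) ≤ c := by
    rw [hc, ENNReal.ofReal_div_of_pos hden]
    exact ENNReal.div_le_div_right h1 _
  have hcne : c ≠ ⊤ ∨ c = ⊤ := (em _).symm.imp id id
  by_cases hct : c = ⊤
  · rw [hct]
    rw [hby]
    rw [EReal.coe_ennreal_top, EReal.add_top_of_ne_bot (by exact_mod_cast EReal.coe_ne_bot b)]
    exact le_top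
  · have hcR : A ^ q / (q * lam ^ (q / p)) ≤ c.toReal :=
      (ENNReal.ofReal_le_iff_le_toReal hct).mp h2
    have hcc : (c : EReal) = ((c.toReal : ℝ) : EReal) := by
      conv_lhs => rw [← ENNReal.ofReal_toReal hct]
      rw [EReal.coe_ennreal_ofReal, max_eq_left ENNReal.toReal_nonneg]
    rw [hax, hby, hcc]
    have hbc : (b : EReal) + (c.toReal : EReal) = ((b + c.toReal : ℝ) : EReal) := by norm_cast
    rw [hbc]
    exact_mod_cast (by linarith : a ≤ b + c.toReal)
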